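/- The completed group algebra Z_p[[Z_p]] of the additive group of p-adic integers over Z_p is isomorphic, as a topological Z_p-algebra, to the power series ring Z_p[[T]], via an isomorphism sending T to t - 1 for t a topological generator of Z_p. -/

import Mathlib

set_option synthInstance.maxHeartbeats 1000000
set_option maxHeartbeats 1000000

/-- The transition map `ℤ_p[ℤ/p^{n+1}] → ℤ_p[ℤ/p^n]` of group algebras induced by the
canonical projection `ℤ/p^{n+1} → ℤ/p^n`. -/
noncomputable def padicGroupAlgebraTrans (p : ℕ) [Fact p.Prime] (n : ℕ) :
    AddMonoidAlgebra ℤ_[p] (ZMod (p ^ (n + 1))) →+* AddMonoidAlgebra ℤ_[p] (ZMod (p ^ n)) :=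
  AddMonoidAlgebra.mapDomainRingHom ℤ_[p]
    (ZMod.castHom (pow_dvd_pow p (Nat.le_succ n)) (ZMod (p ^ n)))

/-- The completed group algebra `ℤ_p[[ℤ_p]] = lim_n ℤ_p[ℤ/p^n]`, realized as the
`ℤ_p`-subalgebra of compatible families in `Π n, ℤ_p[ℤ/p^n]`. -/
noncomputable def completedGroupAlgebra (p : ℕ) [Fact p.Prime] :
    Subalgebra ℤ_[p] (Π n : ℕ, AddMonoidAlgebra ℤ_[p] (ZMod (p ^ n))) where
  carrier := {f | ∀ n, padicGroupAlgebraTrans p n (f (n + 1)) = f n}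
  add_mem' := fun hf hg n => by
    simpa [map_add] using by rw [hf n, hg n]
  mul_mem' := fun hf hg n => by
    simpa [map_mul] using by rw [hf n, hg n]
  one_mem' := fun n => by simp
  zero_mem' := fun n => by simp
  algebraMap_mem' := fun c n => by
    show padicGroupAlgebraTrans p n _ = _
    simp only [Pi.algebraMap_apply, AddMonoidAlgebra.coe_algebraMap, Function.comp_apply,
      padicGroupAlgebraTrans, AddMonoidAlgebra.mapDomainRingHom_apply,
      AddMonoidAlgebra.singleZeroAlgHom_apply]
    exact AddMonoidAlgebra.mapDomain_single.trans (by rw [map_zero])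

/-- `ℤ_p[[ℤ_p]]` with the inverse limit topology: each `ℤ_p[ℤ/p^n]` is topologized as a
finite product of copies of `ℤ_p` (via its coefficient functions). -/
noncomputable instance (p n : ℕ) [Fact p.Prime] :
    TopologicalSpace (AddMonoidAlgebra ℤ_[p] (ZMod (p ^ n))) :=
  TopologicalSpace.induced
    (fun f => ((f.coeff : ZMod (p ^ n) →₀ ℤ_[p]) : ZMod (p ^ n) → ℤ_[p])) inferInstance

/-- `ℤ_p[[T]]` with the product (coefficientwise) topology. -/
noncomputable instance (p : ℕ) [Fact p.Prime] : TopologicalSpace (PowerSeries ℤ_[p]) :=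
  TopologicalSpace.induced (fun f (k : ℕ) => PowerSeries.coeff k f) inferInstance

/-- The canonical topological generator `t = 1 ∈ ℤ_p` of `ℤ_p`, viewed as the compatible
family of group elements `1 ∈ ℤ/p^n` inside the completed group algebra `ℤ_p[[ℤ_p]]`. -/
noncomputable def topGen (p : ℕ) [Fact p.Prime] : completedGroupAlgebra p :=
  ⟨fun n => AddMonoidAlgebra.single (1 : ZMod (p ^ n)) (1 : ℤ_[p]), fun n => by
    show padicGroupAlgebraTrans p n _ = _
    simp only [padicGroupAlgebraTrans, AddMonoidAlgebra.mapDomainRingHom_apply,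
      Finsupp.mapDomain_single, map_one]
    exact AddMonoidAlgebra.mapDomain_single.trans (by
      congr 1; exact map_one (ZMod.castHom (pow_dvd_pow p (Nat.le_succ n)) (ZMod (p ^ n))))⟩

namespace IwasawaAux

open PowerSeries Finsupp Topology

variable (p : ℕ) [hp : Fact p.Prime]

/-- Coordinate functions on the group algebra. -/
noncomputable def co {n : ℕ} (x : AddMonoidAlgebra ℤ_[p] (ZMod (p ^ n))) (g : ZMod (p ^ n)) : ℤ_[p] :=
  x.coeff g

variable (n : ℕ)

lemma isInducing_co :
    IsInducing (fun x : AddMonoidAlgebra ℤ_[p] (ZMod (p ^ n)) =>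
      ((x.coeff : ZMod (p ^ n) →₀ ℤ_[p]) : ZMod (p ^ n) → ℤ_[p])) := ⟨rfl⟩

lemma continuous_co (g : ZMod (p ^ n)) :
    Continuous (fun x : AddMonoidAlgebra ℤ_[p] (ZMod (p ^ n)) => co p x g) :=
  (continuous_apply g).comp (isInducing_co p n).continuous

lemma co_injective :
    Function.Injective (fun x : AddMonoidAlgebra ℤ_[p] (ZMod (p ^ n)) =>
      ((x.coeff : ZMod (p ^ n) →₀ ℤ_[p]) : ZMod (p ^ n) → ℤ_[p])) := by
  intro x y h
  exact AddMonoidAlgebra.ext (Finsupp.ext (fun g => congrFun h g))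

instance : T2Space (AddMonoidAlgebra ℤ_[p] (ZMod (p ^ n))) :=
  (IsEmbedding.mk (isInducing_co p n) (co_injective p n)).t2Space

lemma ext_co {x y : AddMonoidAlgebra ℤ_[p] (ZMod (p ^ n))}
    (h : ∀ g, co p x g = co p y g) : x = y := AddMonoidAlgebra.ext (Finsupp.ext h)

lemma co_add (x y : AddMonoidAlgebra ℤ_[p] (ZMod (p ^ n))) (g) :
    co p (x + y) g = co p x g + co p y g := rfl

lemma co_smul (c : ℤ_[p]) (x : AddMonoidAlgebra ℤ_[p] (ZMod (p ^ n))) (g) :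
    co p (c • x) g = c * co p x g := rfl

lemma co_zero (g : ZMod (p ^ n)) : co p (0 : AddMonoidAlgebra ℤ_[p] (ZMod (p ^ n))) g = 0 := rfl

lemma co_single (s g : ZMod (p ^ n)) (c : ℤ_[p]) :
    co p (AddMonoidAlgebra.single s c : AddMonoidAlgebra ℤ_[p] (ZMod (p ^ n))) g
      = if s = g then c else 0 := Finsupp.single_apply

lemma norm_co_le_one (x : AddMonoidAlgebra ℤ_[p] (ZMod (p ^ n))) (g) :
    ‖co p x g‖ ≤ 1 := PadicInt.norm_le_one _

/-- The group element `t`. -/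
noncomputable def tA : AddMonoidAlgebra ℤ_[p] (ZMod (p ^ n)) :=
  AddMonoidAlgebra.single (1 : ZMod (p ^ n)) (1 : ℤ_[p])

/-- `u = t - 1`. -/
noncomputable def uA : AddMonoidAlgebra ℤ_[p] (ZMod (p ^ n)) := tA p n - 1

lemma one_def : (1 : AddMonoidAlgebra ℤ_[p] (ZMod (p ^ n))) = AddMonoidAlgebra.single 0 1 := rfl

/-- `Finsupp.single` with the group-algebra type. -/
noncomputable def sing (s : ZMod (p ^ n)) (c : ℤ_[p]) : AddMonoidAlgebra ℤ_[p] (ZMod (p ^ n)) :=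
  AddMonoidAlgebra.single s c

lemma co_sing (s g : ZMod (p ^ n)) (c : ℤ_[p]) :
    co p (sing p n s c) g = if s = g then c else 0 := Finsupp.single_apply

instance : ContinuousAdd (AddMonoidAlgebra ℤ_[p] (ZMod (p ^ n))) := by
  constructor
  apply continuous_induced_rng.2
  apply continuous_pi; intro g
  show Continuous fun x : (AddMonoidAlgebra ℤ_[p] (ZMod (p ^ n))) ×
      (AddMonoidAlgebra ℤ_[p] (ZMod (p ^ n))) => co p (x.1 + x.2) g
  simp only [co_add]
  exact ((continuous_co p n g).comp continuous_fst).add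
    ((continuous_co p n g).comp continuous_snd)

lemma tA_pow (m : ℕ) :
    (tA p n) ^ m = AddMonoidAlgebra.single ((m : ZMod (p ^ n))) (1 : ℤ_[p]) := by
  rw [tA, AddMonoidAlgebra.single_pow]
  congr 1
  · simp [nsmul_eq_mul]
  · simp

lemma tA_pow_card : (tA p n) ^ (p ^ n) = 1 := by
  rw [tA_pow, ZMod.natCast_self, one_def]

lemma p_dvd_uA_pow : ((p : ℕ) : AddMonoidAlgebra ℤ_[p] (ZMod (p ^ n))) ∣ (uA p n) ^ (p ^ n) := by
  have hq0 : 0 < p ^ n := pow_pos hp.out.pos n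
  have hexp : (uA p n) ^ (p ^ n)
      = ∑ k ∈ Finset.range (p ^ n + 1), tA p n ^ k * (-1) ^ (p ^ n - k) *
          (((p ^ n).choose k : ℕ) : AddMonoidAlgebra ℤ_[p] (ZMod (p ^ n))) := by
    rw [uA, sub_eq_add_neg]
    exact add_pow _ _ _
  rw [hexp, Finset.sum_range_succ, Finset.range_eq_Ico,
    Finset.sum_eq_sum_Ico_succ_bot hq0, add_right_comm]
  apply dvd_add
  · -- boundary terms : (-1)^q + 1
      have h0 : tA p n ^ 0 * (-1 : AddMonoidAlgebra ℤ_[p] (ZMod (p ^ n))) ^ (p ^ n - 0) *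
          (((p ^ n).choose 0 : ℕ) : AddMonoidAlgebra ℤ_[p] (ZMod (p ^ n)))
            = (-1) ^ (p ^ n) := by simp
      have hq : tA p n ^ (p ^ n) * (-1 : AddMonoidAlgebra ℤ_[p] (ZMod (p ^ n))) ^ (p ^ n - p ^ n) *
          (((p ^ n).choose (p ^ n) : ℕ) : AddMonoidAlgebra ℤ_[p] (ZMod (p ^ n))) = 1 := by
        simp [tA_pow_card]
      rw [h0, hq]
      rcases Nat.even_or_odd (p ^ n) with he | ho
      · have hp2 : p = 2 := hp.out.even_iff.mp (Nat.even_pow.mp he).1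
        rw [he.neg_one_pow, one_add_one_eq_two]
        subst hp2
        norm_num
      · rw [ho.neg_one_pow, neg_add_cancel]
        exact dvd_zero _
  · apply Finset.dvd_sum
    intro k hk
    rw [Finset.mem_Ico] at hk
    have : (p : ℕ) ∣ (p ^ n).choose k :=
      hp.out.dvd_choose_pow (Nat.one_le_iff_ne_zero.mp hk.1) (Nat.ne_of_lt hk.2)
    exact Dvd.dvd.mul_left (Nat.cast_dvd_cast this) _

/-- A witness `v` with `u ^ (p^n) = p • v`. -/
noncomputable def vA : AddMonoidAlgebra ℤ_[p] (ZMod (p ^ n)) := (p_dvd_uA_pow p n).choose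

lemma uA_pow_card : (uA p n) ^ (p ^ n) = ((p : ℕ) : ℤ_[p]) • vA p n := by
  rw [Algebra.smul_def, map_natCast]
  exact (p_dvd_uA_pow p n).choose_spec

/-- `w k` is such that `u ^ k = p ^ (k / p^n) • w k`. -/
noncomputable def wA (k : ℕ) : AddMonoidAlgebra ℤ_[p] (ZMod (p ^ n)) :=
  (vA p n) ^ (k / p ^ n) * (uA p n) ^ (k % p ^ n)

lemma uA_pow_eq (k : ℕ) :
    (uA p n) ^ k = (((p : ℕ) : ℤ_[p]) ^ (k / p ^ n)) • wA p n k := by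
  conv_lhs => rw [← Nat.div_add_mod k (p ^ n)]
  rw [pow_add, pow_mul, uA_pow_card, smul_pow, wA, smul_mul_assoc]

lemma norm_co_uA_pow (k : ℕ) (g : ZMod (p ^ n)) :
    ‖co p ((uA p n) ^ k) g‖ ≤ ((p : ℝ)⁻¹) ^ (k / p ^ n) := by
  rw [uA_pow_eq, co_smul, norm_mul]
  calc ‖(((p : ℕ) : ℤ_[p]) ^ (k / p ^ n) : ℤ_[p])‖ * ‖co p (wA p n k) g‖
      ≤ ‖(((p : ℕ) : ℤ_[p]) ^ (k / p ^ n) : ℤ_[p])‖ * 1 := by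
        exact mul_le_mul_of_nonneg_left (norm_co_le_one p n _ g) (norm_nonneg _)
    _ ≤ ((p : ℝ)⁻¹) ^ (k / p ^ n) := by
        rw [mul_one, norm_pow, PadicInt.norm_p]

lemma real_summable : Summable (fun k : ℕ => ((p : ℝ)⁻¹) ^ (k / p ^ n)) := by
  have hq0 : 0 < p ^ n := pow_pos hp.out.pos n
  have hr0 : (0:ℝ) ≤ (p:ℝ)⁻¹ := by positivity
  have hr1 : (p:ℝ)⁻¹ < 1 := by
    rw [inv_lt_one_iff₀]
    exact Or.inr (by exact_mod_cast hp.out.one_lt)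
  have hgeom : Summable (fun m : ℕ => ((p:ℝ)⁻¹) ^ m) := summable_geometric_of_lt_one hr0 hr1
  apply summable_of_sum_range_le (c := (p ^ n : ℝ) * ∑' m : ℕ, ((p:ℝ)⁻¹) ^ m)
  · intro k; positivity
  · intro K
    have hblock : ∀ K : ℕ, ∑ k ∈ Finset.range (p ^ n * K), ((p:ℝ)⁻¹) ^ (k / p ^ n)
        = (p ^ n : ℝ) * ∑ m ∈ Finset.range K, ((p:ℝ)⁻¹) ^ m := by
      intro K
      induction K with
      | zero => simp
      | succ K ih =>
        rw [Nat.mul_succ, Finset.sum_range_add, ih, Finset.sum_range_succ]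
        have : ∀ i ∈ Finset.range (p ^ n), ((p:ℝ)⁻¹) ^ ((p ^ n * K + i) / p ^ n)
            = ((p:ℝ)⁻¹) ^ K := by
          intro i hi
          rw [Finset.mem_range] at hi
          rw [Nat.mul_add_div hq0, Nat.div_eq_of_lt hi, add_zero]
        rw [Finset.sum_congr rfl this, Finset.sum_const, Finset.card_range,
          nsmul_eq_mul]
        push_cast
        ring
    calc ∑ k ∈ Finset.range K, ((p:ℝ)⁻¹) ^ (k / p ^ n)
        ≤ ∑ k ∈ Finset.range (p ^ n * K), ((p:ℝ)⁻¹) ^ (k / p ^ n) := by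
          apply Finset.sum_le_sum_of_subset_of_nonneg
          · exact Finset.range_subset_range.mpr (Nat.le_mul_of_pos_left K hq0)
          · intros; positivity
      _ = (p ^ n : ℝ) * ∑ m ∈ Finset.range K, ((p:ℝ)⁻¹) ^ m := hblock K
      _ ≤ (p ^ n : ℝ) * ∑' m : ℕ, ((p:ℝ)⁻¹) ^ m := by
          apply mul_le_mul_of_nonneg_left
            (Summable.sum_le_tsum _ (fun _ _ => by positivity) hgeom) (by positivity)

lemma summable_term (f : PowerSeries ℤ_[p]) (g : ZMod (p ^ n)) :
    Summable (fun k : ℕ => (PowerSeries.coeff k f) * co p ((uA p n) ^ k) g) := by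
  apply Summable.of_norm_bounded (real_summable p n)
  intro k
  rw [norm_mul]
  exact le_trans (mul_le_mul_of_nonneg_right (PadicInt.norm_le_one _) (norm_nonneg _))
    (by rw [one_mul]; exact norm_co_uA_pow p n k g)

noncomputable def phiFun (f : PowerSeries ℤ_[p]) : ZMod (p ^ n) → ℤ_[p] :=
  fun g => ∑' k, (PowerSeries.coeff k f) * co p ((uA p n) ^ k) g

noncomputable def phi (f : PowerSeries ℤ_[p]) : AddMonoidAlgebra ℤ_[p] (ZMod (p ^ n)) :=
  AddMonoidAlgebra.ofCoeff (Finsupp.equivFunOnFinite.symm (phiFun p n f))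

lemma co_phi (f : PowerSeries ℤ_[p]) (g : ZMod (p ^ n)) :
    co p (phi p n f) g = phiFun p n f g := by
  rw [phi, co]
  exact congrFun (Finsupp.equivFunOnFinite.apply_symm_apply (phiFun p n f)) g

lemma phi_add (f h : PowerSeries ℤ_[p]) : phi p n (f + h) = phi p n f + phi p n h := by
  apply ext_co p n; intro g
  rw [co_add, co_phi, co_phi, co_phi]
  simp only [phiFun, map_add, add_mul]
  exact Summable.tsum_add (summable_term p n f g) (summable_term p n h g)

lemma phi_coe (P : Polynomial ℤ_[p]) :
    phi p n (P : PowerSeries ℤ_[p]) = Polynomial.aeval (uA p n) P := by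
  induction P using Polynomial.induction_on' with
  | add f g hf hg => rw [Polynomial.coe_add, phi_add, hf, hg, map_add]
  | monomial j c =>
    apply ext_co p n; intro g
    rw [co_phi]
    simp only [phiFun]
    rw [tsum_eq_single j ?_]
    · rw [Polynomial.coeff_coe, Polynomial.coeff_monomial, if_pos rfl,
        Polynomial.aeval_monomial, ← Algebra.smul_def, co_smul]
    · intro k hk
      rw [Polynomial.coeff_coe, Polynomial.coeff_monomial, if_neg (fun h => hk h.symm),
        zero_mul]

lemma phi_one : phi p n 1 = 1 := by
  have : ((1 : Polynomial ℤ_[p]) : PowerSeries ℤ_[p]) = 1 := Polynomial.coe_one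
  rw [← this, phi_coe, map_one]

lemma phi_C (c : ℤ_[p]) :
    phi p n (PowerSeries.C c) = algebraMap ℤ_[p] (AddMonoidAlgebra ℤ_[p] (ZMod (p ^ n))) c := by
  have : ((Polynomial.C c : Polynomial ℤ_[p]) : PowerSeries ℤ_[p]) = PowerSeries.C c :=
    Polynomial.coe_C c
  rw [← this, phi_coe, Polynomial.aeval_C]

lemma phi_X : phi p n PowerSeries.X = uA p n := by
  have : ((Polynomial.X : Polynomial ℤ_[p]) : PowerSeries ℤ_[p]) = PowerSeries.X :=
    Polynomial.coe_X
  rw [← this, phi_coe, Polynomial.aeval_X]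

lemma isInducing_ps :
    IsInducing (fun f : PowerSeries ℤ_[p] => fun k : ℕ => PowerSeries.coeff k f) := ⟨rfl⟩

lemma coeff_cont (k : ℕ) : Continuous fun f : PowerSeries ℤ_[p] => PowerSeries.coeff k f :=
  (continuous_apply k).comp (isInducing_ps p).continuous

lemma phi_cont : Continuous (phi p n) := by
  apply continuous_induced_rng.2
  have heq : ((fun x : AddMonoidAlgebra ℤ_[p] (ZMod (p ^ n)) =>
      ((x.coeff : ZMod (p ^ n) →₀ ℤ_[p]) : ZMod (p ^ n) → ℤ_[p])) ∘ phi p n)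
      = fun f => phiFun p n f := by
    funext f
    funext g
    exact co_phi p n f g
  rw [heq]
  apply continuous_pi; intro g
  apply continuous_tsum (fun k => (coeff_cont p k).mul continuous_const) (real_summable p n)
  intro k f
  rw [Pi.mul_apply, norm_mul]
  exact le_trans (mul_le_mul_of_nonneg_right (PadicInt.norm_le_one _) (norm_nonneg _))
    (by rw [one_mul]; exact norm_co_uA_pow p n k g)

lemma dense_polys :
    Dense (Set.range (fun P : Polynomial ℤ_[p] => (P : PowerSeries ℤ_[p]))) := by
  intro f
  have htend : Filter.Tendsto
      (fun N => ((PowerSeries.trunc N f : Polynomial ℤ_[p]) : PowerSeries ℤ_[p]))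
      Filter.atTop (nhds f) := by
    rw [(isInducing_ps p).tendsto_nhds_iff]
    apply tendsto_pi_nhds.mpr; intro k
    apply Filter.Tendsto.congr' ?_ (tendsto_const_nhds (x := PowerSeries.coeff k f))
    filter_upwards [Filter.eventually_ge_atTop (k + 1)] with N hN
    show PowerSeries.coeff k f = PowerSeries.coeff k _
    rw [Polynomial.coeff_coe, PowerSeries.coeff_trunc, if_pos (by omega)]
  exact mem_closure_of_tendsto htend (Filter.Eventually.of_forall fun N => Set.mem_range_self _)

lemma repr_single (x : AddMonoidAlgebra ℤ_[p] (ZMod (p ^ n))) :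
    x = ∑ a ∈ Finset.univ, (AddMonoidAlgebra.single a (co p x a) : AddMonoidAlgebra ℤ_[p] (ZMod (p ^ n))) := by
  conv_lhs => rw [← AddMonoidAlgebra.sum_coeff_single x]
  exact Finsupp.sum_fintype _ _ (fun a => AddMonoidAlgebra.single_zero a)

lemma mul_expand (x y : AddMonoidAlgebra ℤ_[p] (ZMod (p ^ n))) :
    x * y = ∑ a ∈ Finset.univ, ∑ b ∈ Finset.univ, sing p n (a + b) (co p x a * co p y b) := by
  conv_lhs => rw [repr_single p n x, repr_single p n y]
  rw [Finset.sum_mul_sum]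
  refine Finset.sum_congr rfl fun a _ => Finset.sum_congr rfl fun b _ => ?_
  exact AddMonoidAlgebra.single_mul_single _ _ _ _

lemma cont_single {X : Type} [TopologicalSpace X] (s : ZMod (p ^ n)) {c : X → ℤ_[p]}
    (hc : Continuous c) :
    Continuous fun x => sing p n s (c x) := by
  apply continuous_induced_rng.2
  apply continuous_pi; intro g
  show Continuous fun x => co p (sing p n s (c x)) g
  simp only [co_sing]
  exact Continuous.if_const _ hc continuous_const

lemma mul_left_cont (z : AddMonoidAlgebra ℤ_[p] (ZMod (p ^ n))) :
    Continuous fun y : AddMonoidAlgebra ℤ_[p] (ZMod (p ^ n)) => z * y := by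
  have heq : (fun y : AddMonoidAlgebra ℤ_[p] (ZMod (p ^ n)) => z * y)
      = fun y => ∑ a ∈ Finset.univ, ∑ b ∈ Finset.univ, sing p n (a + b) (co p z a * co p y b) :=
    funext fun y => mul_expand p n z y
  rw [heq]
  apply continuous_finset_sum; intro a _
  apply continuous_finset_sum; intro b _
  exact cont_single p n _ (continuous_const.mul (continuous_co p n b))

lemma mul_right_cont (z : AddMonoidAlgebra ℤ_[p] (ZMod (p ^ n))) :
    Continuous fun y : AddMonoidAlgebra ℤ_[p] (ZMod (p ^ n)) => y * z := by
  have heq : (fun y : AddMonoidAlgebra ℤ_[p] (ZMod (p ^ n)) => y * z)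
      = fun y => ∑ a ∈ Finset.univ, ∑ b ∈ Finset.univ, sing p n (a + b) (co p y a * co p z b) :=
    funext fun y => mul_expand p n y z
  rw [heq]
  apply continuous_finset_sum; intro a _
  apply continuous_finset_sum; intro b _
  exact cont_single p n _ ((continuous_co p n a).mul continuous_const)

lemma ps_mul_left_cont (f₀ : PowerSeries ℤ_[p]) :
    Continuous fun f : PowerSeries ℤ_[p] => f₀ * f := by
  apply continuous_induced_rng.2
  apply continuous_pi; intro k
  show Continuous fun f : PowerSeries ℤ_[p] => PowerSeries.coeff k (f₀ * f)
  simp only [PowerSeries.coeff_mul]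
  apply continuous_finset_sum; intro ab _
  exact continuous_const.mul (coeff_cont p ab.2)

lemma ps_mul_right_cont (f₀ : PowerSeries ℤ_[p]) :
    Continuous fun f : PowerSeries ℤ_[p] => f * f₀ := by
  apply continuous_induced_rng.2
  apply continuous_pi; intro k
  show Continuous fun f : PowerSeries ℤ_[p] => PowerSeries.coeff k (f * f₀)
  simp only [PowerSeries.coeff_mul]
  apply continuous_finset_sum; intro ab _
  exact (coeff_cont p ab.1).mul continuous_const

lemma phi_mul (f h : PowerSeries ℤ_[p]) : phi p n (f * h) = phi p n f * phi p n h := by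
  -- step 1: both polynomials
  have step1 : ∀ P Q : Polynomial ℤ_[p],
      phi p n ((P : PowerSeries ℤ_[p]) * (Q : PowerSeries ℤ_[p]))
        = phi p n P * phi p n Q := by
    intro P Q
    rw [← Polynomial.coe_mul, phi_coe, phi_coe, phi_coe, map_mul]
  -- step 2: P polynomial, h arbitrary
  have step2 : ∀ P : Polynomial ℤ_[p], ∀ h : PowerSeries ℤ_[p],
      phi p n ((P : PowerSeries ℤ_[p]) * h) = phi p n P * phi p n h := by
    intro P h
    have hc1 : Continuous fun h : PowerSeries ℤ_[p] => phi p n ((P : PowerSeries ℤ_[p]) * h) :=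
      (phi_cont p n).comp (ps_mul_left_cont p P)
    have hc2 : Continuous fun h : PowerSeries ℤ_[p] => phi p n P * phi p n h :=
      (mul_left_cont p n _).comp (phi_cont p n)
    have := Continuous.ext_on (dense_polys p) hc1 hc2 ?_
    · exact congrFun this h
    · rintro _ ⟨Q, rfl⟩
      exact step1 P Q
  -- step 3: general
  have hc1 : Continuous fun f : PowerSeries ℤ_[p] => phi p n (f * h) :=
    (phi_cont p n).comp (ps_mul_right_cont p h)
  have hc2 : Continuous fun f : PowerSeries ℤ_[p] => phi p n f * phi p n h :=
    (mul_right_cont p n _).comp (phi_cont p n)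
  have := Continuous.ext_on (dense_polys p) hc1 hc2 ?_
  · exact congrFun this f
  · rintro _ ⟨P, rfl⟩
    exact step2 P h

lemma cont_trans : Continuous (padicGroupAlgebraTrans p n) := by
  apply continuous_induced_rng.2
  apply continuous_pi; intro g
  show Continuous fun x => co p (padicGroupAlgebraTrans p n x) g
  have heq : ∀ x : AddMonoidAlgebra ℤ_[p] (ZMod (p ^ (n + 1))),
      co p (padicGroupAlgebraTrans p n x) g
        = ∑ a ∈ Finset.univ, co p (sing p n
            (ZMod.castHom (pow_dvd_pow p (Nat.le_succ n)) (ZMod (p ^ n)) a) (co p x a)) g := by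
    intro x
    have : padicGroupAlgebraTrans p n x
        = ∑ a ∈ Finset.univ, sing p n
            (ZMod.castHom (pow_dvd_pow p (Nat.le_succ n)) (ZMod (p ^ n)) a) (co p x a) := by
      have hmd : padicGroupAlgebraTrans p n x
          = Finsupp.sum x.coeff (fun a b => AddMonoidAlgebra.single
              (ZMod.castHom (pow_dvd_pow p (Nat.le_succ n)) (ZMod (p ^ n)) a) b) := by
        conv_lhs => rw [← AddMonoidAlgebra.sum_coeff_single x]
        rw [padicGroupAlgebraTrans, AddMonoidAlgebra.mapDomainRingHom_apply,
          AddMonoidAlgebra.mapDomain_sum]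
        simp only [AddMonoidAlgebra.mapDomain_single]
        rfl
      rw [hmd]
      exact Finsupp.sum_fintype _ _ (fun a => AddMonoidAlgebra.single_zero _)
    rw [this]
    unfold co
    rw [AddMonoidAlgebra.coeff_sum]
    exact Finset.sum_apply' g
  simp only [heq]
  apply continuous_finset_sum; intro a _
  simp only [co_sing]
  exact Continuous.if_const _ (continuous_co p (n + 1) a) continuous_const

lemma trans_phi (f : PowerSeries ℤ_[p]) :
    padicGroupAlgebraTrans p n (phi p (n + 1) f) = phi p n f := by
  have hc1 : Continuous fun f => padicGroupAlgebraTrans p n (phi p (n + 1) f) :=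
    (cont_trans p n).comp (phi_cont p (n + 1))
  have hc2 := phi_cont p n
  have := Continuous.ext_on (dense_polys p) hc1 hc2 ?_
  · exact congrFun this f
  · rintro _ ⟨P, rfl⟩
    show padicGroupAlgebraTrans p n (phi p (n + 1) (P : PowerSeries ℤ_[p]))
        = phi p n (P : PowerSeries ℤ_[p])
    rw [phi_coe, phi_coe, Polynomial.aeval_def, Polynomial.aeval_def,
      Polynomial.hom_eval₂]
    congr 1
    · refine RingHom.ext fun c => ?_
      show padicGroupAlgebraTrans p n (algebraMap ℤ_[p] _ c) = algebraMap ℤ_[p] _ c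
      rw [padicGroupAlgebraTrans, AddMonoidAlgebra.mapDomainRingHom_apply]
      show AddMonoidAlgebra.mapDomain _ (AddMonoidAlgebra.single 0 c) = AddMonoidAlgebra.single 0 c
      exact AddMonoidAlgebra.mapDomain_single.trans (by rw [map_zero])
    · show padicGroupAlgebraTrans p n (uA p (n + 1)) = uA p n
      rw [uA, uA, map_sub, map_one]
      congr 1
      rw [tA, tA, padicGroupAlgebraTrans, AddMonoidAlgebra.mapDomainRingHom_apply]
      exact AddMonoidAlgebra.mapDomain_single.trans (by
        congr 1; exact map_one (ZMod.castHom (pow_dvd_pow p (Nat.le_succ n)) (ZMod (p ^ n))))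

lemma neZero_q : NeZero (p ^ n) := ⟨(pow_pos hp.out.pos n).ne'⟩

/-- The linear map sending coordinates to `∑ cⱼ uʲ`, `j < pⁿ`. -/
noncomputable def Fmap : (Fin (p ^ n) →₀ ℤ_[p]) →ₗ[ℤ_[p]] AddMonoidAlgebra ℤ_[p] (ZMod (p ^ n)) :=
  Finsupp.linearCombination ℤ_[p] (fun j : Fin (p ^ n) => (uA p n) ^ (j : ℕ))

lemma span_top :
    Submodule.span ℤ_[p] (Set.range fun j : Fin (p ^ n) => (uA p n) ^ (j : ℕ)) = ⊤ := by
  haveI := neZero_q p n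
  rw [eq_top_iff]
  rintro x -
  rw [repr_single p n x]
  apply Submodule.sum_mem
  intro a _
  have hsing : (AddMonoidAlgebra.single a (co p x a) : AddMonoidAlgebra ℤ_[p] (ZMod (p ^ n)))
      = (co p x a) • sing p n a 1 := by
    rw [sing, AddMonoidAlgebra.smul_single', mul_one]
  rw [hsing]
  apply Submodule.smul_mem
  have hta : sing p n a 1 = (tA p n) ^ (ZMod.val a) := by
    rw [tA_pow, sing]
    congr 1
    exact ((ZMod.natCast_val a).trans (ZMod.cast_id _ a)).symm
  rw [hta]
  have htu : tA p n = uA p n + 1 := by rw [uA]; ring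
  rw [htu, add_pow]
  apply Submodule.sum_mem
  intro k hk
  rw [Finset.mem_range, Nat.lt_succ_iff] at hk
  have hk' : k < p ^ n := lt_of_le_of_lt hk (ZMod.val_lt a)
  rw [one_pow, mul_one]
  have hterm : (uA p n) ^ k * (((ZMod.val a).choose k : ℕ) :
      AddMonoidAlgebra ℤ_[p] (ZMod (p ^ n))) = ((ZMod.val a).choose k) • (uA p n) ^ k := by
    rw [nsmul_eq_mul, mul_comm]
  rw [hterm]
  have hmem : (uA p n) ^ k ∈ Submodule.span ℤ_[p]
      (Set.range fun j : Fin (p ^ n) => (uA p n) ^ (j : ℕ)) :=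
    Submodule.subset_span ⟨⟨k, hk'⟩, rfl⟩
  exact nsmul_mem hmem _

lemma Fmap_surj : Function.Surjective (Fmap p n) := by
  rw [← LinearMap.range_eq_top, Fmap, Finsupp.range_linearCombination, span_top]

lemma Fmap_inj : Function.Injective (Fmap p n) := by
  haveI := neZero_q p n
  haveI : Module.Finite ℤ_[p] (AddMonoidAlgebra ℤ_[p] (ZMod (p ^ n))) :=
    Module.Finite.equiv ((AddMonoidAlgebra.coeffLinearEquiv ℤ_[p]).trans
      (Finsupp.linearEquivFunOnFinite ℤ_[p] ℤ_[p] (ZMod (p ^ n)))).symm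
  let E : (AddMonoidAlgebra ℤ_[p] (ZMod (p ^ n))) ≃ₗ[ℤ_[p]] (Fin (p ^ n) →₀ ℤ_[p]) :=
    (AddMonoidAlgebra.coeffLinearEquiv ℤ_[p]).trans
      (Finsupp.domLCongr (Fintype.equivFinOfCardEq (ZMod.card (p ^ n))))
  have hGsurj : Function.Surjective (Fmap p n ∘ₗ E.toLinearMap) :=
    (Fmap_surj p n).comp E.surjective
  have hGinj := OrzechProperty.injective_of_surjective_endomorphism _ hGsurj
  intro x y hxy
  have h2 : (Fmap p n ∘ₗ E.toLinearMap) (E.symm x) = (Fmap p n ∘ₗ E.toLinearMap) (E.symm y) := by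
    simp only [LinearMap.comp_apply, LinearEquiv.coe_coe, LinearEquiv.apply_symm_apply]
    exact hxy
  exact E.symm.injective (hGinj h2)

lemma p_dvd_coeff (f : PowerSeries ℤ_[p]) (hf : phi p n f = 0) (j : ℕ) (hj : j < p ^ n) :
    ((p : ℕ) : ℤ_[p]) ∣ PowerSeries.coeff j f := by
  haveI := neZero_q p n
  have hq0 : 0 < p ^ n := pow_pos hp.out.pos n
  have hphi0 : ∀ g, phiFun p n f g = 0 := by
    intro g; rw [← co_phi, hf, co_zero]
  have htail_term : ∀ (k : ℕ) (g : ZMod (p ^ n)),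
      PowerSeries.coeff (k + p ^ n) f * co p ((uA p n) ^ (k + p ^ n)) g
      = ((p:ℕ):ℤ_[p]) * (PowerSeries.coeff (k + p ^ n) f *
          (((p:ℕ):ℤ_[p]) ^ (k / p ^ n) * co p (wA p n (k + p ^ n)) g)) := by
    intro k g
    rw [uA_pow_eq p n (k + p ^ n), co_smul, Nat.add_div_right k hq0, pow_succ]
    ring
  have hsum2 : ∀ g : ZMod (p ^ n), Summable (fun k : ℕ => PowerSeries.coeff (k + p ^ n) f *
      (((p:ℕ):ℤ_[p]) ^ (k / p ^ n) * co p (wA p n (k + p ^ n)) g)) := by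
    intro g
    apply Summable.of_norm_bounded (real_summable p n)
    intro k
    rw [norm_mul, norm_mul]
    calc ‖PowerSeries.coeff (k + p ^ n) f‖ *
          (‖(((p:ℕ):ℤ_[p]) ^ (k / p ^ n) : ℤ_[p])‖ * ‖co p (wA p n (k + p ^ n)) g‖)
        ≤ 1 * (((p:ℝ)⁻¹) ^ (k / p ^ n) * 1) := by
          apply mul_le_mul (PadicInt.norm_le_one _) _ (by positivity) zero_le_one
          apply mul_le_mul _ (norm_co_le_one p n _ g) (norm_nonneg _) (by positivity)
          rw [norm_pow, PadicInt.norm_p]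
      _ = ((p:ℝ)⁻¹) ^ (k / p ^ n) := by ring
  set S : ZMod (p ^ n) → ℤ_[p] := fun g => ∑' k, PowerSeries.coeff (k + p ^ n) f *
      (((p:ℕ):ℤ_[p]) ^ (k / p ^ n) * co p (wA p n (k + p ^ n)) g) with hS
  have hsplit : ∀ g, (∑ i ∈ Finset.range (p ^ n),
      PowerSeries.coeff i f * co p ((uA p n) ^ i) g) + ((p:ℕ):ℤ_[p]) * S g = 0 := by
    intro g
    have h1 := Summable.sum_add_tsum_nat_add (f := fun k =>
      PowerSeries.coeff k f * co p ((uA p n) ^ k) g) (p ^ n) (summable_term p n f g)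
    have h2 : ∑' k, PowerSeries.coeff (k + p ^ n) f * co p ((uA p n) ^ (k + p ^ n)) g
        = ((p:ℕ):ℤ_[p]) * S g := by
      rw [hS, ← Summable.tsum_mul_left _ (hsum2 g)]
      exact tsum_congr fun k => htail_term k g
    rw [h2] at h1
    rw [h1]
    exact hphi0 g
  set z : AddMonoidAlgebra ℤ_[p] (ZMod (p ^ n)) :=
    ∑ i ∈ Finset.range (p ^ n), PowerSeries.coeff i f • (uA p n) ^ i with hz
  have hcoz : ∀ g, co p z g = ∑ i ∈ Finset.range (p ^ n),
      PowerSeries.coeff i f * co p ((uA p n) ^ i) g := by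
    intro g
    show (∑ i ∈ Finset.range (p ^ n), PowerSeries.coeff i f • (uA p n) ^ i).coeff g = _
    rw [AddMonoidAlgebra.coeff_sum]
    exact (Finset.sum_apply' g).trans (Finset.sum_congr rfl fun i _ => co_smul p n _ _ g)
  set y : AddMonoidAlgebra ℤ_[p] (ZMod (p ^ n)) :=
    AddMonoidAlgebra.ofCoeff (Finsupp.equivFunOnFinite.symm (fun g => - S g)) with hy
  have hcoy : ∀ g, co p y g = - S g := by
    intro g
    rw [hy]
    exact congrFun (Finsupp.equivFunOnFinite.apply_symm_apply
      (fun g : ZMod (p ^ n) => - S g)) g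
  have hzy : z = ((p:ℕ):ℤ_[p]) • y := by
    apply ext_co p n; intro g
    rw [co_smul, hcoy, hcoz]
    linear_combination hsplit g
  obtain ⟨d, hd⟩ := Fmap_surj p n y
  set cvec : Fin (p ^ n) →₀ ℤ_[p] :=
    Finsupp.equivFunOnFinite.symm (fun j : Fin (p ^ n) => PowerSeries.coeff (j : ℕ) f)
    with hc
  have hcvec : ∀ i : Fin (p ^ n), cvec i = PowerSeries.coeff (i : ℕ) f := by
    intro i
    rw [hc]
    exact congrFun (Finsupp.equivFunOnFinite.apply_symm_apply
      (fun j : Fin (p ^ n) => PowerSeries.coeff (j : ℕ) f)) i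
  have hFc : Fmap p n cvec = z := by
    rw [Fmap, Finsupp.linearCombination_apply]
    rw [Finsupp.sum_fintype]
    · rw [hz, ← Fin.sum_univ_eq_sum_range
        (fun i => PowerSeries.coeff i f • (uA p n) ^ i) (p ^ n)]
      apply Finset.sum_congr rfl
      intro i _
      rw [hcvec]
    · intro i
      exact zero_smul _ _
  have hFF : Fmap p n cvec = Fmap p n (((p:ℕ):ℤ_[p]) • d) := by
    rw [map_smul, hd, hFc, hzy]
  have hcd := Fmap_inj p n hFF
  refine ⟨d ⟨j, hj⟩, ?_⟩
  have h3 : cvec ⟨j, hj⟩ = ((p:ℕ):ℤ_[p]) * d ⟨j, hj⟩ := by rw [hcd]; rfl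
  rw [← hcvec ⟨j, hj⟩]
  exact h3

noncomputable def phiHom : PowerSeries ℤ_[p] →ₐ[ℤ_[p]] AddMonoidAlgebra ℤ_[p] (ZMod (p ^ n)) where
  toFun := phi p n
  map_one' := phi_one p n
  map_mul' := phi_mul p n
  map_zero' := by
    show phi p n 0 = 0
    have h0 : ((0 : Polynomial ℤ_[p]) : PowerSeries ℤ_[p]) = 0 := Polynomial.coe_zero
    rw [← h0, phi_coe, map_zero]
  map_add' := phi_add p n
  commutes' := phi_C p n

noncomputable def PhiPi :
    PowerSeries ℤ_[p] →ₐ[ℤ_[p]] (Π n : ℕ, AddMonoidAlgebra ℤ_[p] (ZMod (p ^ n))) :=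
  Pi.algHom _ _ (fun n => phiHom p n)

lemma Phi_mem (f : PowerSeries ℤ_[p]) : PhiPi p f ∈ completedGroupAlgebra p :=
  fun n => trans_phi p n f

noncomputable def Phi : PowerSeries ℤ_[p] →ₐ[ℤ_[p]] completedGroupAlgebra p :=
  (PhiPi p).codRestrict _ (Phi_mem p)

lemma coeff_dvd_pow_of_phi_zero (m : ℕ) :
    ∀ f : PowerSeries ℤ_[p], (∀ n, phi p n f = 0) → ∀ j,
      (((p : ℕ) : ℤ_[p])) ^ m ∣ PowerSeries.coeff j f := by
  induction m with
  | zero => intro f _ j; simp only [pow_zero]; exact one_dvd _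
  | succ m ih =>
    intro f hf j
    have hdvd : ∀ i, ((p : ℕ) : ℤ_[p]) ∣ PowerSeries.coeff i f := by
      intro i
      exact p_dvd_coeff p (i + 1) f (hf (i + 1)) i
        (lt_trans (Nat.lt_succ_self i) (Nat.lt_pow_self hp.out.one_lt))
    set f' : PowerSeries ℤ_[p] := PowerSeries.mk (fun i => (hdvd i).choose) with hf'
    have hff' : f = PowerSeries.C ((p : ℕ) : ℤ_[p]) * f' := by
      ext k
      rw [PowerSeries.coeff_C_mul, hf', PowerSeries.coeff_mk]
      exact (hdvd k).choose_spec
    have hphif' : ∀ n, phi p n f' = 0 := by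
      intro n
      have h0 : phi p n f = algebraMap ℤ_[p] _ ((p : ℕ) : ℤ_[p]) * phi p n f' := by
        rw [hff', phi_mul, phi_C]
      rw [hf n] at h0
      apply ext_co p n; intro g
      have h1 := congrArg (fun x => co p x g) h0.symm
      simp only [co_zero] at h1 ⊢
      rw [← Algebra.smul_def, co_smul] at h1
      rcases mul_eq_zero.mp h1 with h | h
      · exact absurd h (Nat.cast_ne_zero.mpr hp.out.ne_zero)
      · exact h
    obtain ⟨d, hdd⟩ := ih f' hphif' j
    refine ⟨d, ?_⟩
    rw [hff', PowerSeries.coeff_C_mul, hdd]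
    ring

lemma Phi_inj : Function.Injective (Phi p) := by
  have hker : ∀ f, Phi p f = 0 → f = 0 := by
    intro f hf0
    have hcomp : ∀ n, phi p n f = 0 := by
      intro n
      exact congrArg (fun x : completedGroupAlgebra p =>
        (x : Π n : ℕ, AddMonoidAlgebra ℤ_[p] (ZMod (p ^ n))) n) hf0
    apply PowerSeries.ext; intro k
    have hnorm : ∀ m : ℕ, ‖PowerSeries.coeff k f‖ ≤ ((p : ℝ)⁻¹) ^ m := by
      intro m
      obtain ⟨d, hd⟩ := coeff_dvd_pow_of_phi_zero p m f hcomp k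
      rw [hd, norm_mul, norm_pow, PadicInt.norm_p]
      exact mul_le_of_le_one_right (by positivity) (PadicInt.norm_le_one d)
    have hr1 : (p : ℝ)⁻¹ < 1 := by
      rw [inv_lt_one_iff₀]
      exact Or.inr (by exact_mod_cast hp.out.one_lt)
    have hlim : Filter.Tendsto (fun m : ℕ => ((p : ℝ)⁻¹) ^ m) Filter.atTop (nhds 0) :=
      tendsto_pow_atTop_nhds_zero_of_lt_one (by positivity) hr1
    have hle : ‖PowerSeries.coeff k f‖ ≤ 0 :=
      ge_of_tendsto hlim (Filter.Eventually.of_forall hnorm)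
    have : ‖PowerSeries.coeff k f‖ = 0 := le_antisymm hle (norm_nonneg _)
    rw [norm_eq_zero] at this
    simpa using this
  intro f g hfg
  have h1 : Phi p (f - g) = 0 := by rw [map_sub, hfg, sub_self]
  exact sub_eq_zero.mp (hker _ h1)

noncomputable def psEquiv : PowerSeries ℤ_[p] ≃ (ℕ → ℤ_[p]) where
  toFun f k := PowerSeries.coeff k f
  invFun c := PowerSeries.mk c
  left_inv f := by ext k; simp [PowerSeries.coeff_mk]
  right_inv c := by funext k; simp [PowerSeries.coeff_mk]

lemma isInducing_psEquiv : IsInducing (psEquiv p) := ⟨rfl⟩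

noncomputable def psHomeo : PowerSeries ℤ_[p] ≃ₜ (ℕ → ℤ_[p]) :=
  (psEquiv p).toHomeomorphOfIsInducing (isInducing_psEquiv p)

instance : CompactSpace (PowerSeries ℤ_[p]) := (psHomeo p).symm.compactSpace

lemma Phi_surj : Function.Surjective (Phi p) := by
  rintro ⟨x, hx⟩
  set Z : ℕ → Set (PowerSeries ℤ_[p]) := fun n => {f | phi p n f = x n} with hZ
  have hZc : ∀ n, IsClosed (Z n) := fun n => isClosed_singleton.preimage (phi_cont p n)
  have hZn : ∀ n, (Z n).Nonempty := by
    intro n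
    obtain ⟨c, hc⟩ := Fmap_surj p n (x n)
    refine ⟨((c.sum fun j a => Polynomial.monomial (j : ℕ) a : Polynomial ℤ_[p]) :
      PowerSeries ℤ_[p]), ?_⟩
    show phi p n _ = x n
    rw [phi_coe, ← hc, Fmap, Finsupp.linearCombination_apply, map_finsuppSum]
    apply Finsupp.sum_congr
    intro i _
    rw [Polynomial.aeval_monomial, ← Algebra.smul_def]
  have hZd : ∀ n, Z (n + 1) ⊆ Z n := by
    intro n f hfz
    show phi p n f = x n
    rw [← trans_phi p n f]
    have : phi p (n + 1) f = x (n + 1) := hfz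
    rw [this]
    exact hx n
  obtain ⟨f, hfmem⟩ := IsCompact.nonempty_iInter_of_sequence_nonempty_isCompact_isClosed
    Z hZd hZn ((hZc 0).isCompact) hZc
  refine ⟨f, ?_⟩
  apply Subtype.ext
  funext n
  exact Set.mem_iInter.mp hfmem n

end IwasawaAux


/-- The Iwasawa isomorphism: the completed group algebra `ℤ_p[[ℤ_p]]` is isomorphic, as a
topological `ℤ_p`-algebra, to the power series ring `ℤ_p[[T]]`, via an isomorphism sending
`T` to `t - 1`, where `t` is a topological generator of `ℤ_p`. -/
theorem iwasawa_isomorphism (p : ℕ) [Fact p.Prime] :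
    ∃ e : PowerSeries ℤ_[p] ≃ₐ[ℤ_[p]] completedGroupAlgebra p,
      Continuous e ∧ Continuous e.symm ∧ e PowerSeries.X = topGen p - 1 := by
  classical
  set e := AlgEquiv.ofBijective (IwasawaAux.Phi p)
    ⟨IwasawaAux.Phi_inj p, IwasawaAux.Phi_surj p⟩ with he
  have hcont : Continuous ⇑e :=
    Continuous.subtype_mk (continuous_pi fun n => IwasawaAux.phi_cont p n) _
  have hcont2 : Continuous ⇑e.symm := by
    have h2 : Continuous ⇑e.toEquiv := hcont
    exact h2.continuous_symm_of_equiv_compact_to_t2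
  refine ⟨e, hcont, hcont2, ?_⟩
  apply Subtype.ext
  funext n
  show IwasawaAux.phi p n PowerSeries.X = _
  rw [IwasawaAux.phi_X, IwasawaAux.uA, IwasawaAux.tA]
  rfl
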